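/- arXiv:1807.00406 — 2 statements merged into one kernel-verified Lean document; each statement's English description precedes it below -/
import Mathlib

section
/- The ratio of the number of nonsquarefree numbers to the number of squarefree numbers up to N tends to π²/6 − 1: the quantity (#{n : 1 ≤ n ≤ N and n is not squarefree})/(#{n : 1 ≤ n ≤ N and n is squarefree}) tends to π²/6 − 1 as N → ∞. -/
open Filter Real
open scoped ArithmeticFunction.Moebius

open Finset ArithmeticFunction in
private lemma divisors_filter_sq_dvd' {n : ℕ} (hn : n ≠ 0) :
    n.divisors.filter (fun d => d ^ 2 ∣ n) = (Nat.floorRoot 2 n).divisors := by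
  ext d
  simp only [Finset.mem_filter, Nat.mem_divisors, Nat.pow_dvd_iff_dvd_floorRoot]
  constructor
  · rintro ⟨-, h⟩
    exact ⟨h, Nat.floorRoot_ne_zero.2 ⟨two_ne_zero, hn⟩⟩
  · rintro ⟨h, -⟩
    exact ⟨⟨h.trans ((dvd_pow_self _ two_ne_zero).trans (Nat.floorRoot_pow_dvd)), hn⟩, h⟩

private lemma floorRoot_eq_one_iff' {n : ℕ} (hn : n ≠ 0) :
    Nat.floorRoot 2 n = 1 ↔ Squarefree n := by
  rw [Nat.squarefree_iff_prime_squarefree, Nat.eq_one_iff_not_exists_prime_dvd]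
  refine forall_congr' fun p => imp_congr Iff.rfl (not_congr ?_)
  rw [← Nat.pow_dvd_iff_dvd_floorRoot, pow_two]

open Finset ArithmeticFunction in
private lemma sum_moebius_sq_dvd' {n : ℕ} (hn : n ≠ 0) :
    (∑ d ∈ n.divisors.filter (fun d => d ^ 2 ∣ n), μ d)
      = if Squarefree n then 1 else 0 := by
  rw [divisors_filter_sq_dvd' hn, ← coe_mul_zeta_apply, moebius_mul_coe_zeta, one_apply]
  simp only [floorRoot_eq_one_iff' hn]

open Finset ArithmeticFunction in
private lemma card_squarefree_eq' (N : ℕ) :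
    ((((Finset.Icc 1 N).filter (fun n => Squarefree n)).card : ℤ))
      = ∑ d ∈ Finset.Icc 1 N, μ d * (N / d ^ 2 : ℕ) := by
  have h1 : ∀ n ∈ Finset.Icc 1 N, (if Squarefree n then (1:ℤ) else 0)
      = ∑ d ∈ (Finset.Icc 1 N).filter (fun d => d ^ 2 ∣ n), μ d := by
    intro n hn
    rw [Finset.mem_Icc] at hn
    have hn0 : n ≠ 0 := by omega
    rw [← sum_moebius_sq_dvd' hn0]
    apply Finset.sum_congr _ (fun _ _ => rfl)
    ext d
    simp only [Finset.mem_filter, Nat.mem_divisors, Finset.mem_Icc]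
    constructor
    · rintro ⟨⟨h1, h2⟩, h3⟩
      have hd0 : d ≠ 0 := by rintro rfl; simp at h3; omega
      exact ⟨⟨Nat.one_le_iff_ne_zero.2 hd0,
        le_trans (Nat.le_of_dvd (by omega) ((dvd_pow_self _ two_ne_zero).trans h3)) hn.2⟩, h3⟩
    · rintro ⟨-, h3⟩
      exact ⟨⟨(dvd_pow_self _ two_ne_zero).trans h3, hn0⟩, h3⟩
  calc ((((Finset.Icc 1 N).filter (fun n => Squarefree n)).card : ℤ))
      = ∑ n ∈ Finset.Icc 1 N, (if Squarefree n then (1:ℤ) else 0) := by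
        rw [Finset.card_filter]; push_cast; rfl
    _ = ∑ n ∈ Finset.Icc 1 N, ∑ d ∈ (Finset.Icc 1 N).filter (fun d => d ^ 2 ∣ n), μ d :=
        Finset.sum_congr rfl h1
    _ = ∑ n ∈ Finset.Icc 1 N, ∑ d ∈ Finset.Icc 1 N, if d ^ 2 ∣ n then μ d else 0 := by
        simp_rw [Finset.sum_filter]
    _ = ∑ d ∈ Finset.Icc 1 N, ∑ n ∈ Finset.Icc 1 N, if d ^ 2 ∣ n then μ d else 0 :=
        Finset.sum_comm
    _ = ∑ d ∈ Finset.Icc 1 N, μ d * (N / d ^ 2 : ℕ) := by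
        refine Finset.sum_congr rfl fun d _ => ?_
        have hI : Finset.Icc 1 N = Finset.Ioc 0 N := by rw [← Finset.Icc_add_one_left_eq_Ioc, zero_add]
        rw [← Finset.sum_filter, Finset.sum_const, hI, Nat.Ioc_filter_dvd_card_eq_div,
          nsmul_eq_mul, mul_comm]

open ArithmeticFunction in
private lemma summable_f' : Summable (fun d : ℕ => (μ d : ℝ) / (d:ℝ) ^ 2) := by
  apply Summable.of_abs
  apply Summable.of_nonneg_of_le (fun d => abs_nonneg _) (fun d => ?_)
    (Real.summable_one_div_nat_pow.mpr one_lt_two)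
  rcases eq_or_ne d 0 with rfl | hd
  · simp
  · rw [abs_div, abs_pow, Nat.abs_cast]
    have h1 : |(μ d : ℝ)| ≤ 1 := by exact_mod_cast abs_moebius_le_one
    have h2 : (0:ℝ) < (d:ℝ) ^ 2 := by positivity
    calc |(μ d : ℝ)| / (d:ℝ)^2 ≤ 1 / (d:ℝ)^2 := by gcongr
    _ = _ := rfl

open ArithmeticFunction in
private lemma tsum_f' : ∑' d : ℕ, ((μ d : ℝ) / (d:ℝ) ^ 2) = 6 / π ^ 2 := by
  have h2 : (1 : ℝ) < (2 : ℂ).re := by norm_num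
  have hmul := LSeries_zeta_mul_Lseries_moebius h2
  rw [LSeries_zeta_eq_riemannZeta h2, riemannZeta_two] at hmul
  have hL : LSeries (fun n => (μ n : ℂ)) 2 = 6 / (π : ℂ) ^ 2 := by
    rw [eq_div_iff (pow_ne_zero 2 (Complex.ofReal_ne_zero.mpr Real.pi_ne_zero))]
    linear_combination 6 * hmul
  have hterm : ∀ n : ℕ, LSeries.term (fun n => (μ n : ℂ)) 2 n = ((μ n : ℝ) / (n:ℝ) ^ 2 : ℝ) := by
    intro n
    rcases eq_or_ne n 0 with rfl | hn
    · simp [LSeries.term]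
    · rw [LSeries.term_of_ne_zero hn]
      push_cast
      rw [Complex.cpow_ofNat]
  have hts : ((∑' d : ℕ, ((μ d : ℝ) / (d:ℝ) ^ 2) : ℝ) : ℂ) = LSeries (fun n => (μ n : ℂ)) 2 := by
    rw [Complex.ofReal_tsum, LSeries]
    exact tsum_congr fun n => (hterm n).symm
  rw [hL] at hts
  have h6 : ((∑' d : ℕ, ((μ d : ℝ) / (d:ℝ) ^ 2) : ℝ) : ℂ) = ((6 / π ^ 2 : ℝ) : ℂ) := by
    rw [hts]; push_cast; ring
  exact_mod_cast h6

private lemma floor_div_bounds' (m n : ℕ) (hn : 0 < n) :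
    (m:ℝ)/n - 1 ≤ ((m/n : ℕ):ℝ) ∧ ((m/n : ℕ):ℝ) ≤ (m:ℝ)/n := by
  constructor
  · have h1 := Nat.div_add_mod m n
    have h2 := Nat.mod_lt m hn
    have h : m < (m/n + 1) * n := by nlinarith [h1, h2]
    have h' : (m:ℝ) < ((m/n : ℕ) + 1) * n := by exact_mod_cast h
    have hn' : (0:ℝ) < n := by exact_mod_cast hn
    rw [div_sub_one (ne_of_gt hn'), div_le_iff₀ hn']
    nlinarith
  · exact Nat.cast_div_le

private lemma nat_sqrt_tendsto' : Tendsto Nat.sqrt atTop atTop := by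
  apply Filter.tendsto_atTop_atTop.mpr
  intro b
  exact ⟨b ^ 2, fun a ha => by
    calc b = Nat.sqrt (b ^ 2) := (Nat.sqrt_eq' b).symm
    _ ≤ Nat.sqrt a := Nat.sqrt_le_sqrt ha⟩

open ArithmeticFunction in
private lemma partial_sums_tendsto' :
    Tendsto (fun K : ℕ => ∑ d ∈ Finset.Icc 1 K, (μ d : ℝ) / (d:ℝ) ^ 2) atTop
      (nhds (∑' d : ℕ, ((μ d : ℝ) / (d:ℝ) ^ 2))) := by
  have h1 : ∀ K : ℕ, ∑ d ∈ Finset.Icc 1 K, (μ d : ℝ) / (d:ℝ) ^ 2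
      = ∑ d ∈ Finset.range (K + 1), (μ d : ℝ) / (d:ℝ) ^ 2 := by
    intro K
    refine Finset.sum_subset ?_ ?_
    · intro d hd
      rw [Finset.mem_Icc] at hd
      rw [Finset.mem_range]
      omega
    · intro d hd hd2
      rw [Finset.mem_range] at hd
      rw [Finset.mem_Icc] at hd2
      have : d = 0 := by omega
      simp [this]
  simp only [h1]
  exact summable_f'.hasSum.tendsto_sum_nat.comp (tendsto_add_atTop_nat 1)

open ArithmeticFunction in
private lemma key_bound' (N : ℕ) (hN : 1 ≤ N) :
    |(((Finset.Icc 1 N).filter (fun n => Squarefree n)).card : ℝ) / (N:ℝ)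
        - ∑ d ∈ Finset.Icc 1 (Nat.sqrt N), (μ d : ℝ) / (d:ℝ) ^ 2|
      ≤ (Nat.sqrt N : ℝ) / (N:ℝ) := by
  have hN0 : (0:ℝ) < N := by exact_mod_cast hN
  have hS : (((Finset.Icc 1 N).filter (fun n => Squarefree n)).card : ℝ)
      = ∑ d ∈ Finset.Icc 1 (Nat.sqrt N), (μ d : ℝ) * ((N / d ^ 2 : ℕ) : ℝ) := by
    have h1 : (((Finset.Icc 1 N).filter (fun n => Squarefree n)).card : ℝ)
        = ∑ d ∈ Finset.Icc 1 N, (μ d : ℝ) * ((N / d ^ 2 : ℕ) : ℝ) := by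
      have h2 := congrArg (Int.cast : ℤ → ℝ) (card_squarefree_eq' N)
      push_cast at h2
      exact h2
    rw [h1]
    refine (Finset.sum_subset (Finset.Icc_subset_Icc le_rfl (Nat.sqrt_le_self N)) ?_).symm
    intro d hd hd2
    rw [Finset.mem_Icc] at hd hd2
    push_neg at hd2
    have : N < d ^ 2 := Nat.sqrt_lt'.mp (hd2 hd.1)
    rw [Nat.div_eq_of_lt this]
    simp
  rw [hS, Finset.sum_div, ← Finset.sum_sub_distrib]
  refine (Finset.abs_sum_le_sum_abs _ _).trans ?_
  have hcard : (Finset.Icc 1 (Nat.sqrt N)).card = Nat.sqrt N := by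
    rw [Nat.card_Icc]; omega
  calc ∑ d ∈ Finset.Icc 1 (Nat.sqrt N),
        |(μ d : ℝ) * ((N / d ^ 2 : ℕ) : ℝ) / (N:ℝ) - (μ d : ℝ) / (d:ℝ) ^ 2|
      ≤ ∑ _d ∈ Finset.Icc 1 (Nat.sqrt N), 1 / (N:ℝ) := by
        refine Finset.sum_le_sum fun d hd => ?_
        rw [Finset.mem_Icc] at hd
        have hdpos : 0 < d := hd.1
        have hd0 : (0:ℝ) < (d:ℝ) ^ 2 := by positivity
        have hb := floor_div_bounds' N (d ^ 2) (pow_pos hdpos 2)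
        have hb1 := hb.1; have hb2 := hb.2
        push_cast at hb1 hb2
        have hmu : |(μ d : ℝ)| ≤ 1 := by exact_mod_cast abs_moebius_le_one
        have hdiff : |((N / d ^ 2 : ℕ) : ℝ) / (N:ℝ) - 1 / (d:ℝ)^2| ≤ 1 / (N:ℝ) := by
          have h3 : ((N / d ^ 2 : ℕ) : ℝ)/(N:ℝ) - 1/(d:ℝ)^2
              = (((N / d ^ 2 : ℕ) : ℝ) - (N:ℝ)/(d:ℝ)^2)/(N:ℝ) := by
            field_simp
          rw [h3, abs_div, abs_of_pos hN0, div_le_div_iff_of_pos_right hN0, abs_le]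
          constructor <;> nlinarith
        have hrw : (μ d : ℝ) * ((N / d ^ 2 : ℕ) : ℝ) / (N:ℝ) - (μ d : ℝ) / (d:ℝ) ^ 2
            = (μ d : ℝ) * (((N / d ^ 2 : ℕ) : ℝ) / (N:ℝ) - 1 / (d:ℝ)^2) := by
          field_simp
        rw [hrw, abs_mul]
        exact (mul_le_mul hmu hdiff (abs_nonneg _) zero_le_one).trans_eq (one_mul _)
    _ = (Nat.sqrt N : ℝ) / (N:ℝ) := by
        rw [Finset.sum_const, hcard, nsmul_eq_mul, mul_one_div]

private lemma sqrt_div_tendsto' : Tendsto (fun N : ℕ => (Nat.sqrt N : ℝ) / N) atTop (nhds 0) := by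
  have h0 : Tendsto (fun N : ℕ => 1 / (Nat.sqrt N : ℝ)) atTop (nhds 0) :=
    tendsto_one_div_atTop_nhds_zero_nat.comp nat_sqrt_tendsto'
  refine squeeze_zero' ?_ ?_ h0
  · filter_upwards [eventually_ge_atTop 1] with N hN
    positivity
  · filter_upwards [eventually_ge_atTop 1] with N hN
    have hs : 1 ≤ Nat.sqrt N := by
      rw [Nat.le_sqrt]; omega
    have hs' : (0:ℝ) < Nat.sqrt N := by exact_mod_cast hs
    have hN0 : (0:ℝ) < N := by exact_mod_cast hN
    rw [div_le_div_iff₀ hN0 hs', one_mul]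
    have h5 : ((Nat.sqrt N : ℝ)) * (Nat.sqrt N : ℝ) ≤ N := by
      rw [← Nat.cast_mul]
      exact_mod_cast by simpa [pow_two] using Nat.sqrt_le' N
    linarith

private lemma density_tendsto' :
    Tendsto (fun N : ℕ => (((Finset.Icc 1 N).filter (fun n => Squarefree n)).card : ℝ) / (N:ℝ))
      atTop (nhds (6 / π ^ 2)) := by
  rw [← tsum_f']
  have hg := partial_sums_tendsto'.comp nat_sqrt_tendsto'
  have hdiff : Tendsto (fun N : ℕ =>
      (((Finset.Icc 1 N).filter (fun n => Squarefree n)).card : ℝ) / (N:ℝ)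
        - ∑ d ∈ Finset.Icc 1 (Nat.sqrt N), (ArithmeticFunction.moebius d : ℝ) / (d:ℝ) ^ 2)
      atTop (nhds 0) := by
    refine squeeze_zero_norm' ?_ sqrt_div_tendsto'
    filter_upwards [eventually_ge_atTop 1] with N hN
    simpa [Real.norm_eq_abs] using key_bound' N hN
  have h := hdiff.add hg
  rw [zero_add] at h
  refine h.congr fun N => ?_
  simp

theorem ratio_nonsquarefree_to_squarefree :
    Filter.Tendsto
      (fun N : ℕ =>
        (((Finset.Icc 1 N).filter (fun n => ¬ Squarefree n)).card : ℝ)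
          / (((Finset.Icc 1 N).filter (fun n => Squarefree n)).card : ℝ))
      Filter.atTop (nhds (Real.pi ^ 2 / 6 - 1)) := by
  have hpi : (0:ℝ) < π ^ 2 := by positivity
  have hc : (6 / π ^ 2 : ℝ) ≠ 0 := by positivity
  have hinv : Tendsto (fun N : ℕ =>
      ((((Finset.Icc 1 N).filter (fun n => Squarefree n)).card : ℝ) / (N:ℝ))⁻¹)
      atTop (nhds (π ^ 2 / 6)) := by
    have h := density_tendsto'.inv₀ hc
    rwa [inv_div] at h
  have hfinal := hinv.sub_const 1
  rw [show Real.pi ^ 2 / 6 - 1 = π ^ 2 / 6 - 1 from rfl]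
  refine hfinal.congr' ?_
  filter_upwards [eventually_ge_atTop 1] with N hN
  set S := ((Finset.Icc 1 N).filter (fun n => Squarefree n)).card with hSdef
  set T := ((Finset.Icc 1 N).filter (fun n => ¬ Squarefree n)).card with hTdef
  have hST : S + T = N := by
    rw [hSdef, hTdef, Finset.card_filter_add_card_filter_not, Nat.card_Icc]
    omega
  have hS1 : 1 ≤ S := by
    rw [hSdef]
    refine Finset.card_pos.mpr ⟨1, ?_⟩
    rw [Finset.mem_filter, Finset.mem_Icc]
    exact ⟨⟨le_refl 1, hN⟩, squarefree_one⟩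
  have hS0 : (0:ℝ) < S := by exact_mod_cast hS1
  have hN0 : (0:ℝ) < N := by exact_mod_cast hN
  have hSTr : (S:ℝ) + T = N := by exact_mod_cast hST
  rw [inv_div, eq_div_iff (ne_of_gt hS0)]
  field_simp
  linarith
end

section
/- The ratio of the number of nonsquarefree multiples of 6 to the number of squarefree multiples of 6 tends to π²/3 − 1: the quantity (#{m : 1 ≤ m ≤ N and 6m is not squarefree})/(#{m : 1 ≤ m ≤ N and 6m is squarefree}) tends to π²/3 − 1 as N → ∞. -/
open Filter Real Finset ArithmeticFunction
open scoped ArithmeticFunction.Moebius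


private lemma squarefree_prod_of_primes {s : Finset ℕ} (hs : ∀ p ∈ s, p.Prime) :
    Squarefree (∏ p ∈ s, p) := by
  induction s using Finset.induction_on with
  | empty => simpa using squarefree_one
  | @insert p s' hx ih =>
    rw [Finset.prod_insert hx]
    have hp := hs p (Finset.mem_insert_self p s')
    have hcop : Nat.Coprime p (∏ q ∈ s', q) := by
      apply Nat.Coprime.prod_right
      intro q hq
      exact (Nat.coprime_primes hp (hs q (Finset.mem_insert_of_mem hq))).mpr
        (fun h => hx (h ▸ hq))
    rw [Nat.squarefree_mul hcop]
    exact ⟨hp.squarefree, ih (fun q hq => hs q (Finset.mem_insert_of_mem hq))⟩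

-- the "excess radical": product of primes p with p^2 ∣ n
private def rad2 (n : ℕ) : ℕ := ∏ p ∈ n.primeFactors.filter (fun p => p ^ 2 ∣ n), p

private lemma rad2_squarefree (n : ℕ) : Squarefree (rad2 n) :=
  squarefree_prod_of_primes fun p hp => Nat.prime_of_mem_primeFactors (Finset.mem_filter.mp hp).1

private lemma rad2_dvd (n : ℕ) (hn : n ≠ 0) : rad2 n ∣ n := by
  apply Finset.prod_primes_dvd
  · intro p hp
    exact (Nat.prime_of_mem_primeFactors (Finset.mem_filter.mp hp).1).prime
  · intro p hp
    exact Nat.dvd_of_mem_primeFactors (Finset.mem_filter.mp hp).1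

private lemma rad2_eq_one_iff {n : ℕ} (hn : n ≠ 0) : rad2 n = 1 ↔ Squarefree n := by
  constructor
  · intro h
    rw [Nat.squarefree_iff_prime_squarefree]
    intro p hp hpn
    have hmem : p ∈ n.primeFactors.filter (fun p => p ^ 2 ∣ n) := by
      rw [Finset.mem_filter, Nat.mem_primeFactors]
      have hpp : p.Prime := hp
      exact ⟨⟨hpp, dvd_trans (dvd_mul_right p p) hpn, hn⟩, by rwa [pow_two]⟩
    have hpr : p ∣ rad2 n := Finset.dvd_prod_of_mem _ hmem
    rw [h] at hpr
    exact hp.one_lt.ne' (Nat.eq_one_of_dvd_one hpr)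
  · intro h
    rw [rad2]
    apply Finset.prod_eq_one
    intro p hp
    exfalso
    rw [Finset.mem_filter, Nat.mem_primeFactors] at hp
    exact (Nat.prime_of_mem_primeFactors (Nat.mem_primeFactors.mpr hp.1)).not_isUnit
      (h p (by rw [← pow_two]; exact hp.2))

-- d squarefree: d ∣ rad2 n ↔ d^2 ∣ n
private lemma dvd_rad2_iff {n d : ℕ} (hn : n ≠ 0) (hd : Squarefree d) :
    d ∣ rad2 n ↔ d ^ 2 ∣ n := by
  constructor
  · intro h
    have hsub : d.primeFactors ⊆ n.primeFactors.filter (fun p => p ^ 2 ∣ n) := by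
      intro p hp
      have hpd : p ∣ d := Nat.dvd_of_mem_primeFactors hp
      have hpp := Nat.prime_of_mem_primeFactors hp
      have hprad : p ∣ rad2 n := dvd_trans hpd h
      rw [rad2] at hprad
      rw [Nat.Prime.prime hpp |>.dvd_finset_prod_iff _] at hprad
      obtain ⟨q, hq, hpq⟩ := hprad
      have hqp := Nat.prime_of_mem_primeFactors (Finset.mem_filter.mp hq).1
      have : p = q := ((Nat.prime_dvd_prime_iff_eq hpp hqp).mp hpq)
      rwa [this]
    have hd2 : d ^ 2 = ∏ p ∈ d.primeFactors, p ^ 2 := by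
      rw [Finset.prod_pow, Nat.prod_primeFactors_of_squarefree hd]
    rw [hd2]
    apply Finset.prod_dvd_of_isRelPrime
    · intro p hp q hq hpq
      simp only [Function.onFun]
      rw [← Nat.coprime_iff_isRelPrime]
      exact Nat.Coprime.pow 2 2 ((Nat.coprime_primes (Nat.prime_of_mem_primeFactors hp)
        (Nat.prime_of_mem_primeFactors hq)).mpr hpq)
    · intro p hp
      exact (Finset.mem_filter.mp (hsub hp)).2
  · intro h
    have hsub : d.primeFactors ⊆ n.primeFactors.filter (fun p => p ^ 2 ∣ n) := by
      intro p hp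
      rw [Finset.mem_filter, Nat.mem_primeFactors]
      have hpd : p ∣ d := Nat.dvd_of_mem_primeFactors hp
      have hpp := Nat.prime_of_mem_primeFactors hp
      have hp2 : p ^ 2 ∣ n := dvd_trans (pow_dvd_pow_of_dvd hpd 2) h
      exact ⟨⟨hpp, dvd_trans (dvd_pow_self p two_ne_zero) hp2, hn⟩, hp2⟩
    calc d = ∏ p ∈ d.primeFactors, p := (Nat.prod_primeFactors_of_squarefree hd).symm
    _ ∣ rad2 n := Finset.prod_dvd_prod_of_subset _ _ _ hsub

-- key indicator identity
private lemma moebius_indicator {n K : ℕ} (hn : n ≠ 0) (hK : n ≤ K) :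
    ∑ d ∈ Finset.Icc 1 K, (if d ^ 2 ∣ n then μ d else 0) =
      if Squarefree n then 1 else 0 := by
  have step1 : ∀ d ∈ Finset.Icc 1 K, (if d ^ 2 ∣ n then μ d else 0) =
      (if d ∣ rad2 n then μ d else 0) := by
    intro d _
    by_cases hd : Squarefree d
    · exact if_congr (dvd_rad2_iff hn hd).symm rfl rfl
    · simp [moebius_eq_zero_of_not_squarefree hd]
  rw [Finset.sum_congr rfl step1]
  have hsub : (rad2 n).divisors ⊆ Finset.Icc 1 K := by
    intro d hd
    rw [Nat.mem_divisors] at hd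
    have hr : rad2 n ≤ n := Nat.le_of_dvd (Nat.pos_of_ne_zero hn) (rad2_dvd n hn)
    have : d ≤ rad2 n := Nat.le_of_dvd (Nat.pos_of_ne_zero hd.2) hd.1
    have hd1 : 1 ≤ d := Nat.pos_of_ne_zero (fun h => by subst h; exact hd.2 (zero_dvd_iff.mp hd.1))
    exact Finset.mem_Icc.mpr ⟨hd1, le_trans this (le_trans hr hK)⟩
  have hr0 : rad2 n ≠ 0 := (rad2_squarefree n).ne_zero
  have : ∑ d ∈ Finset.Icc 1 K, (if d ∣ rad2 n then μ d else 0) =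
      ∑ d ∈ (rad2 n).divisors, μ d := by
    rw [← Finset.sum_subset hsub]
    · apply Finset.sum_congr rfl
      intro d hd
      rw [if_pos (Nat.mem_divisors.mp hd).1]
    · intro d hd hnd
      rw [if_neg]
      intro hdvd
      exact hnd (Nat.mem_divisors.mpr ⟨hdvd, hr0⟩)
  rw [this]
  have := congrArg (fun f : ArithmeticFunction ℤ => f (rad2 n)) moebius_mul_coe_zeta
  simp only [coe_mul_zeta_apply, one_apply] at this
  rw [this]
  exact if_congr (rad2_eq_one_iff hn) rfl rfl

private def qd (d : ℕ) : ℕ := d ^ 2 / Nat.gcd (d ^ 2) 6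

private lemma qd_mul (d : ℕ) : qd d * Nat.gcd (d ^ 2) 6 = d ^ 2 :=
  Nat.div_mul_cancel (Nat.gcd_dvd_left _ _)

private lemma qd_pos {d : ℕ} (hd : d ≠ 0) : 0 < qd d := by
  have h2 : 0 < d ^ 2 := by positivity
  have := qd_mul d
  by_contra h
  push_neg at h
  interval_cases hq : qd d <;> omega

private lemma sq_le_six_qd (d : ℕ) : d ^ 2 ≤ 6 * qd d := by
  have h := qd_mul d
  have : Nat.gcd (d ^ 2) 6 ≤ 6 := Nat.le_of_dvd (by norm_num) (Nat.gcd_dvd_right _ _)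
  nlinarith [Nat.zero_le (qd d)]

private lemma sq_dvd_iff {d m : ℕ} (hd : d ≠ 0) : d ^ 2 ∣ 6 * m ↔ qd d ∣ m := by
  set g := Nat.gcd (d ^ 2) 6 with hg
  have hgpos : 0 < g := Nat.gcd_pos_of_pos_left _ (by positivity)
  have hg6 : g ∣ 6 := Nat.gcd_dvd_right _ _
  have hcop : Nat.Coprime (d ^ 2 / g) (6 / g) := Nat.coprime_div_gcd_div_gcd hgpos
  have h1 : d ^ 2 = g * qd d := by
    rw [qd, mul_comm, ← hg, Nat.div_mul_cancel (Nat.gcd_dvd_left _ _)]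
  have h2 : 6 * m = g * ((6 / g) * m) := by
    rw [← mul_assoc, Nat.mul_div_cancel' hg6]
  rw [h1, h2, mul_dvd_mul_iff_left hgpos.ne']
  constructor
  · intro h
    exact (Nat.Coprime.dvd_of_dvd_mul_left hcop h)
  · intro h
    exact Dvd.dvd.mul_left h _

private lemma count_eq (N : ℕ) :
    (((Finset.Icc 1 N).filter (fun m => Squarefree (6 * m))).card : ℤ) =
      ∑ d ∈ Finset.Icc 1 (6 * N), μ d * ((N / qd d : ℕ) : ℤ) := by
  have step1 : (((Finset.Icc 1 N).filter (fun m => Squarefree (6 * m))).card : ℤ) =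
      ∑ m ∈ Finset.Icc 1 N, (if Squarefree (6 * m) then (1 : ℤ) else 0) := by
    rw [Finset.card_filter]
    push_cast
    rfl
  rw [step1]
  have step2 : ∀ m ∈ Finset.Icc 1 N, (if Squarefree (6 * m) then (1 : ℤ) else 0) =
      ∑ d ∈ Finset.Icc 1 (6 * N), (if d ^ 2 ∣ 6 * m then μ d else 0) := by
    intro m hm
    rw [Finset.mem_Icc] at hm
    rw [moebius_indicator (by omega) (by omega)]
  rw [Finset.sum_congr rfl step2, Finset.sum_comm]
  apply Finset.sum_congr rfl
  intro d hd
  rw [Finset.mem_Icc] at hd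
  have hd0 : d ≠ 0 := by omega
  have step3 : ∀ m ∈ Finset.Icc 1 N, (if d ^ 2 ∣ 6 * m then μ d else 0) =
      (if qd d ∣ m then μ d else 0) := by
    intro m _
    exact if_congr (sq_dvd_iff hd0) rfl rfl
  rw [Finset.sum_congr rfl step3, ← Finset.sum_filter,
    Finset.sum_const, show Finset.Icc 1 N = Finset.Ioc 0 N from rfl,
    Nat.Ioc_filter_dvd_card_eq_div, nsmul_eq_mul, mul_comm]
-- the limit function
private noncomputable def Ff : ℕ → ℝ :=
  fun d => if d = 0 then 0 else (μ d : ℝ) * (Nat.gcd (d ^ 2) 6 : ℝ) / (d : ℝ) ^ 2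

private lemma Ff_eq {d : ℕ} (hd : d ≠ 0) : Ff d = (μ d : ℝ) / (qd d : ℝ) := by
  rw [Ff, if_neg hd]
  have h := qd_mul d
  have h1 : ((qd d : ℝ)) * ((Nat.gcd (d ^ 2) 6 : ℕ) : ℝ) = ((d : ℝ)) ^ 2 := by
    exact_mod_cast congrArg (Nat.cast : ℕ → ℝ) h
  have hq : (0:ℝ) < (qd d : ℝ) := by exact_mod_cast qd_pos hd
  have hd2 : (0:ℝ) < (d:ℝ)^2 := by positivity
  field_simp
  linear_combination (μ d : ℝ) * h1

private lemma Ff_bound (d : ℕ) : |Ff d| ≤ 6 / (d : ℝ) ^ 2 := by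
  rcases eq_or_ne d 0 with rfl | hd
  · simp [Ff]
  · rw [Ff, if_neg hd]
    have hd2 : (0:ℝ) < (d:ℝ)^2 := by positivity
    rw [abs_div, abs_mul, abs_of_pos hd2]
    gcongr
    have h1 : |(μ d : ℝ)| ≤ 1 := by exact_mod_cast abs_moebius_le_one (n := d)
    have h2 : |((Nat.gcd (d ^ 2) 6 : ℕ) : ℝ)| ≤ 6 := by
      rw [abs_of_nonneg (by positivity)]
      exact_mod_cast Nat.le_of_dvd (by norm_num) (Nat.gcd_dvd_right (d^2) 6)
    calc |(μ d : ℝ)| * |((Nat.gcd (d ^ 2) 6 : ℕ) : ℝ)| ≤ 1 * 6 := by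
          apply mul_le_mul h1 h2 (abs_nonneg _) zero_le_one
    _ = 6 := by ring

private lemma bound_summable : Summable (fun d : ℕ => 6 / (d : ℝ) ^ 2) := by
  have := (Real.summable_one_div_nat_pow (p := 2)).mpr one_lt_two
  simpa [div_eq_mul_inv] using this.mul_left 6

private lemma tendsto_nat_div_cast (q : ℕ) (hq : 0 < q) :
    Tendsto (fun N : ℕ => ((N / q : ℕ) : ℝ) / (N : ℝ)) atTop (nhds (1 / (q : ℝ))) := by
  have hqR : (0:ℝ) < q := by exact_mod_cast hq
  apply tendsto_of_tendsto_of_tendsto_of_le_of_le'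
    (g := fun N : ℕ => 1 / (q:ℝ) - 1 / (N:ℝ)) (h := fun _ => 1 / (q:ℝ))
  · have : Tendsto (fun N : ℕ => 1 / (N:ℝ)) atTop (nhds 0) :=
      tendsto_one_div_atTop_nhds_zero_nat
    simpa using (tendsto_const_nhds.sub this)
  · exact tendsto_const_nhds
  · filter_upwards [eventually_ge_atTop 1] with N hN
    have hN0 : (0:ℝ) < N := by exact_mod_cast hN
    rw [sub_le_iff_le_add, ← add_div, div_le_div_iff₀ hqR hN0]
    have key : (N : ℝ) ≤ ((N / q : ℕ) : ℝ) * q + q := by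
      have h1 := Nat.div_add_mod N q
      have h2 := Nat.mod_lt N hq
      have h3 : N ≤ q * (N / q) + q := by omega
      have h4 : (N:ℝ) ≤ (q:ℝ) * ((N / q : ℕ):ℝ) + q := by exact_mod_cast h3
      linarith
    nlinarith [key]
  · filter_upwards [eventually_ge_atTop 1] with N hN
    have hN0 : (0:ℝ) < N := by exact_mod_cast hN
    rw [div_le_div_iff₀ hN0 hqR]
    have : ((N / q : ℕ) : ℝ) * q ≤ N := by
      exact_mod_cast Nat.div_mul_le_self N q
    linarith

private noncomputable def gN (N d : ℕ) : ℝ :=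
  if d ∈ Finset.Icc 1 (6 * N) then (μ d : ℝ) * ((N / qd d : ℕ) : ℝ) / (N : ℝ) else 0

private lemma tsum_gN (N : ℕ) :
    ∑' d, gN N d = (((Finset.Icc 1 N).filter (fun m => Squarefree (6 * m))).card : ℝ) / N := by
  rw [tsum_eq_sum (s := Finset.Icc 1 (6 * N)) (fun b hb => by rw [gN, if_neg hb])]
  have : (((Finset.Icc 1 N).filter (fun m => Squarefree (6 * m))).card : ℝ) =
      ∑ d ∈ Finset.Icc 1 (6 * N), (μ d : ℝ) * ((N / qd d : ℕ) : ℝ) := by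
    have := congrArg (fun z : ℤ => (z : ℝ)) (count_eq N)
    push_cast at this
    exact this
  rw [this, Finset.sum_div]
  exact Finset.sum_congr rfl fun d hd => by rw [gN, if_pos hd]

private lemma gN_tendsto (d : ℕ) : Tendsto (fun N => gN N d) atTop (nhds (Ff d)) := by
  rcases eq_or_ne d 0 with rfl | hd
  · have : ∀ N, gN N 0 = 0 := fun N => by simp [gN]
    simp only [this, Ff, if_pos rfl]
    exact tendsto_const_nhds
  · have hq := qd_pos hd
    have h1 : Tendsto (fun N : ℕ => (μ d : ℝ) * (((N / qd d : ℕ) : ℝ) / (N : ℝ)))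
        atTop (nhds ((μ d : ℝ) * (1 / (qd d : ℝ)))) :=
      (tendsto_nat_div_cast (qd d) hq).const_mul _
    rw [Ff_eq hd]
    have heq : (μ d : ℝ) * (1 / (qd d : ℝ)) = (μ d : ℝ) / (qd d : ℝ) := by ring
    rw [← heq]
    apply h1.congr'
    filter_upwards [eventually_ge_atTop d] with N hN
    have hmem : d ∈ Finset.Icc 1 (6 * N) := by
      rw [Finset.mem_Icc]
      omega
    rw [gN, if_pos hmem]
    ring

private lemma gN_bound (N d : ℕ) : ‖gN N d‖ ≤ 6 / (d : ℝ) ^ 2 := by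
  rw [gN]
  split_ifs with h
  · rw [Finset.mem_Icc] at h
    have hd0 : d ≠ 0 := by omega
    have hN0 : (0:ℕ) < N := by omega
    have hNR : (0:ℝ) < N := by exact_mod_cast hN0
    have hq := qd_pos hd0
    have hqR : (0:ℝ) < (qd d : ℝ) := by exact_mod_cast hq
    have hd2 : (0:ℝ) < (d:ℝ)^2 := by positivity
    rw [Real.norm_eq_abs, abs_div, abs_mul, abs_of_pos hNR]
    have h1 : |(μ d : ℝ)| ≤ 1 := by exact_mod_cast abs_moebius_le_one (n := d)
    have h2 : |((N / qd d : ℕ) : ℝ)| / (N:ℝ) ≤ 1 / (qd d : ℝ) := by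
      rw [abs_of_nonneg (Nat.cast_nonneg _), div_le_div_iff₀ hNR hqR]
      have : ((N / qd d : ℕ) : ℝ) * (qd d : ℝ) ≤ N := by
        exact_mod_cast Nat.div_mul_le_self N (qd d)
      linarith
    have h3 : 1 / (qd d : ℝ) ≤ 6 / (d:ℝ)^2 := by
      rw [div_le_div_iff₀ hqR hd2]
      have : (d:ℝ)^2 ≤ 6 * (qd d : ℝ) := by exact_mod_cast sq_le_six_qd d
      linarith
    calc |(μ d : ℝ)| * |((N / qd d : ℕ) : ℝ)| / (N:ℝ)
        = |(μ d : ℝ)| * (|((N / qd d : ℕ) : ℝ)| / (N:ℝ)) := by ring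
      _ ≤ 1 * (1 / (qd d : ℝ)) := by
          apply mul_le_mul h1 h2 (by positivity) zero_le_one
      _ ≤ 6 / (d:ℝ)^2 := by rw [one_mul]; exact h3
  · rw [norm_zero]
    positivity

private lemma main_tendsto :
    Tendsto (fun N : ℕ =>
      (((Finset.Icc 1 N).filter (fun m => Squarefree (6 * m))).card : ℝ) / N)
      atTop (nhds (∑' d, Ff d)) := by
  have := tendsto_tsum_of_dominated_convergence (f := gN) (g := Ff)
    (bound := fun d => 6 / (d : ℝ) ^ 2) bound_summable gN_tendsto
    (Eventually.of_forall gN_bound)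
  apply this.congr
  intro N
  exact tsum_gN N
private noncomputable def Fa : ArithmeticFunction ℝ := ⟨Ff, by rw [Ff]; simp⟩

private noncomputable def Ga : ArithmeticFunction ℝ :=
  ⟨fun d => if d = 0 then 0 else (μ d : ℝ) / (d : ℝ) ^ 2, by simp⟩

private lemma Fa_apply (d : ℕ) :
    Fa d = if d = 0 then 0 else (μ d : ℝ) * (Nat.gcd (d ^ 2) 6 : ℝ) / (d : ℝ) ^ 2 := rfl

private lemma Ga_apply (d : ℕ) :
    Ga d = if d = 0 then 0 else (μ d : ℝ) / (d : ℝ) ^ 2 := rfl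

private lemma Ga_bound (d : ℕ) : |Ga d| ≤ 6 / (d : ℝ) ^ 2 := by
  rcases eq_or_ne d 0 with rfl | hd
  · simp [Ga]
  · rw [Ga_apply, if_neg hd]
    have hd2 : (0:ℝ) < (d:ℝ)^2 := by positivity
    rw [abs_div, abs_of_pos hd2]
    gcongr
    have h1 : |(μ d : ℝ)| ≤ 1 := by exact_mod_cast abs_moebius_le_one (n := d)
    linarith

private lemma Fa_mult : Fa.IsMultiplicative := by
  rw [ArithmeticFunction.IsMultiplicative.iff_ne_zero]
  constructor
  · rw [Fa_apply]
    norm_num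
  · intro m n hm hn hmn
    rw [Fa_apply, Fa_apply, Fa_apply, if_neg (Nat.mul_ne_zero hm hn), if_neg hm, if_neg hn]
    have hmoeb : (μ (m * n) : ℝ) = (μ m : ℝ) * (μ n : ℝ) := by
      exact_mod_cast congrArg (fun z : ℤ => (z : ℝ)) (isMultiplicative_moebius.map_mul_of_coprime hmn)
    have hgcd : Nat.gcd ((m * n) ^ 2) 6 = Nat.gcd (m ^ 2) 6 * Nat.gcd (n ^ 2) 6 := by
      rw [mul_pow, Nat.gcd_comm, Nat.Coprime.gcd_mul _ (Nat.Coprime.pow 2 2 hmn),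
        Nat.gcd_comm (m ^ 2), Nat.gcd_comm (n ^ 2)]
    rw [hmoeb, hgcd]
    push_cast
    have hm2 : ((m:ℝ))^2 ≠ 0 := by positivity
    have hn2 : ((n:ℝ))^2 ≠ 0 := by positivity
    field_simp

private lemma Ga_mult : Ga.IsMultiplicative := by
  rw [ArithmeticFunction.IsMultiplicative.iff_ne_zero]
  constructor
  · rw [Ga_apply]
    norm_num
  · intro m n hm hn hmn
    rw [Ga_apply, Ga_apply, Ga_apply, if_neg (Nat.mul_ne_zero hm hn), if_neg hm, if_neg hn]
    have hmoeb : (μ (m * n) : ℝ) = (μ m : ℝ) * (μ n : ℝ) := by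
      exact_mod_cast congrArg (fun z : ℤ => (z : ℝ)) (isMultiplicative_moebius.map_mul_of_coprime hmn)
    rw [hmoeb]
    push_cast
    have hm2 : ((m:ℝ))^2 ≠ 0 := by positivity
    have hn2 : ((n:ℝ))^2 ≠ 0 := by positivity
    rw [mul_pow]
    field_simp
    try ring
    try exact Or.inl trivial

private lemma Fa_summable : Summable (fun d => ‖Fa d‖) := by
  apply Summable.of_nonneg_of_le (fun d => norm_nonneg _) (fun d => ?_) bound_summable
  rw [Real.norm_eq_abs]
  exact Ff_bound d

private lemma Ga_summable : Summable (fun d => ‖Ga d‖) := by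
  apply Summable.of_nonneg_of_le (fun d => norm_nonneg _) (fun d => ?_) bound_summable
  rw [Real.norm_eq_abs]
  exact Ga_bound d

-- local factors
private lemma local_Fa {p : ℕ} (hp : p.Prime) :
    ∑' e : ℕ, Fa (p ^ e) = 1 - (Nat.gcd (p ^ 2) 6 : ℝ) / (p : ℝ) ^ 2 := by
  rw [tsum_eq_sum (s := {0, 1}) ?_]
  · rw [Finset.sum_pair (by norm_num)]
    have h0 : Fa (p ^ 0) = 1 := by
      rw [Fa_apply]
      norm_num
    have h1 : Fa (p ^ 1) = -(Nat.gcd (p ^ 2) 6 : ℝ) / (p : ℝ) ^ 2 := by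
      rw [Fa_apply, if_neg (pow_ne_zero _ hp.pos.ne'), pow_one]
      rw [moebius_apply_prime hp]
      push_cast
      ring
    rw [h0, h1]
    ring
  · intro e he
    simp only [Finset.mem_insert, Finset.mem_singleton] at he
    push_neg at he
    have h2 : 2 ≤ e := by omega
    rw [Fa_apply, if_neg (pow_ne_zero _ hp.pos.ne')]
    have : μ (p ^ e) = 0 := by
      apply moebius_eq_zero_of_not_squarefree
      intro hsq
      have := hsq p (by rw [← pow_two]; exact pow_dvd_pow p h2)
      exact hp.one_lt.ne' (Nat.isUnit_iff.mp this)
    rw [this]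
    push_cast
    ring

private lemma local_Ga {p : ℕ} (hp : p.Prime) :
    ∑' e : ℕ, Ga (p ^ e) = 1 - 1 / (p : ℝ) ^ 2 := by
  rw [tsum_eq_sum (s := {0, 1}) ?_]
  · rw [Finset.sum_pair (by norm_num)]
    have h0 : Ga (p ^ 0) = 1 := by
      rw [Ga_apply]
      norm_num
    have h1 : Ga (p ^ 1) = -1 / (p : ℝ) ^ 2 := by
      rw [Ga_apply, if_neg (pow_ne_zero _ hp.pos.ne'), pow_one, moebius_apply_prime hp]
      push_cast
      ring
    rw [h0, h1]
    ring
  · intro e he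
    simp only [Finset.mem_insert, Finset.mem_singleton] at he
    push_neg at he
    have h2 : 2 ≤ e := by omega
    rw [Ga_apply, if_neg (pow_ne_zero _ hp.pos.ne')]
    have : μ (p ^ e) = 0 := by
      apply moebius_eq_zero_of_not_squarefree
      intro hsq
      have := hsq p (by rw [← pow_two]; exact pow_dvd_pow p h2)
      exact hp.one_lt.ne' (Nat.isUnit_iff.mp this)
    rw [this]
    push_cast
    ring

-- value of ∑' Ga via L-series
private lemma Ga_tsum : ∑' n, Ga n = 6 / π ^ 2 := by
  have h2 : (1 : ℝ) < (2 : ℂ).re := by norm_num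
  have hmul := LSeries_zeta_mul_Lseries_moebius (s := 2) h2
  rw [LSeries_zeta_eq_riemannZeta h2, riemannZeta_two] at hmul
  have hpi2 : ((π : ℂ)) ^ 2 ≠ 0 := pow_ne_zero 2 (Complex.ofReal_ne_zero.mpr Real.pi_ne_zero)
  have hL : LSeries (fun n => ((μ n : ℤ) : ℂ)) 2 = 6 / (π : ℂ) ^ 2 := by
    field_simp at hmul ⊢
    linear_combination hmul
  -- identify LSeries with complexification of our real tsum
  have hterm : ∀ n : ℕ, LSeries.term (fun n => ((μ n : ℤ) : ℂ)) 2 n = ((Ga n : ℝ) : ℂ) := by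
    intro n
    rcases eq_or_ne n 0 with rfl | hn
    · rw [LSeries.term_zero, Ga_apply]
      norm_num
    · rw [LSeries.term_of_ne_zero hn, Ga_apply, if_neg hn]
      push_cast
      rw [show ((2 : ℂ)) = ((2 : ℕ) : ℂ) by norm_num, Complex.cpow_natCast]
  have hfinal : ((∑' n, Ga n : ℝ) : ℂ) = ((6 / π ^ 2 : ℝ) : ℂ) := by
    rw [Complex.ofReal_tsum, ← tsum_congr fun n => (hterm n), ← LSeries, hL]
    push_cast
    ring
  exact_mod_cast hfinal

private lemma Fa_tsum : ∑' n, Fa n = 3 / π ^ 2 := by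
  have hF := Fa_mult.eulerProduct Fa_summable
  have hG := Ga_mult.eulerProduct Ga_summable
  -- compare partial products
  have key : ∀ᶠ n : ℕ in atTop,
      ∏ p ∈ n.primesBelow, ∑' e : ℕ, Fa (p ^ e) =
        (1 / 2) * ∏ p ∈ n.primesBelow, ∑' e : ℕ, Ga (p ^ e) := by
    filter_upwards [eventually_ge_atTop 4] with n hn
    have h23 : ({2, 3} : Finset ℕ) ⊆ n.primesBelow := by
      intro p hp
      simp only [Finset.mem_insert, Finset.mem_singleton] at hp
      rcases hp with rfl | rfl
      · exact Nat.mem_primesBelow.mpr ⟨by omega, Nat.prime_two⟩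
      · exact Nat.mem_primesBelow.mpr ⟨by omega, Nat.prime_three⟩
    have hprod : ∀ p ∈ n.primesBelow, (∑' e : ℕ, Fa (p ^ e)) =
        (if p = 2 then (2:ℝ)/3 else if p = 3 then 3/4 else 1) * ∑' e : ℕ, Ga (p ^ e) := by
      intro p hp
      have hpp : p.Prime := (Nat.mem_primesBelow.mp hp).2
      rw [local_Fa hpp, local_Ga hpp]
      rcases eq_or_ne p 2 with rfl | h2
      · norm_num
      rcases eq_or_ne p 3 with rfl | h3
      · norm_num
      rw [if_neg h2, if_neg h3, one_mul]
      have hgcd : Nat.gcd (p ^ 2) 6 = 1 := by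
        have hc2 : Nat.Coprime p 2 := (Nat.coprime_primes hpp Nat.prime_two).mpr h2
        have hc3 : Nat.Coprime p 3 := (Nat.coprime_primes hpp Nat.prime_three).mpr h3
        have : Nat.Coprime p 6 := by
          have : (6 : ℕ) = 2 * 3 := by norm_num
          rw [this]
          exact Nat.Coprime.mul_right hc2 hc3
        exact Nat.Coprime.pow_left 2 this
      rw [hgcd]
      norm_num
    rw [Finset.prod_congr rfl hprod, Finset.prod_mul_distrib]
    congr 1
    rw [← Finset.prod_subset h23 ?_]
    · rw [Finset.prod_pair (by norm_num)]
      norm_num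
    · intro p hp hnp
      simp only [Finset.mem_insert, Finset.mem_singleton] at hnp
      push_neg at hnp
      rw [if_neg hnp.1, if_neg hnp.2]
  have hlim : Tendsto (fun n : ℕ => ∏ p ∈ n.primesBelow, ∑' e : ℕ, Fa (p ^ e)) atTop
      (nhds ((1 / 2) * ∑' n, Ga n)) := by
    apply Tendsto.congr' (key.mono fun n hn => hn.symm)
    exact hG.const_mul _
  have := tendsto_nhds_unique hF hlim
  rw [this, Ga_tsum]
  ring

theorem ratio_nonsquarefree_to_squarefree_multiples_of_six :
    Filter.Tendsto
      (fun N : ℕ =>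
        (((Finset.Icc 1 N).filter (fun m => ¬ Squarefree (6 * m))).card : ℝ)
          / (((Finset.Icc 1 N).filter (fun m => Squarefree (6 * m))).card : ℝ))
      Filter.atTop (nhds (Real.pi ^ 2 / 3 - 1)) := by
  have hFf : ∑' d, Ff d = 3 / π ^ 2 := (tsum_congr fun d => rfl).trans Fa_tsum
  have hmain2 : Tendsto (fun N : ℕ =>
      (((Finset.Icc 1 N).filter (fun m => Squarefree (6 * m))).card : ℝ) / N)
      atTop (nhds (3 / π ^ 2)) := hFf ▸ main_tendsto
  have hpi2 : (0:ℝ) < π ^ 2 := by positivity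
  have hlam : (0:ℝ) < 3 / π ^ 2 := by positivity
  have hev : ∀ᶠ N : ℕ in atTop,
      (0:ℝ) < (((Finset.Icc 1 N).filter (fun m => Squarefree (6 * m))).card : ℝ) / N :=
    hmain2.eventually (eventually_gt_nhds hlam)
  have hdiv : Tendsto (fun N : ℕ =>
      (1 - (((Finset.Icc 1 N).filter (fun m => Squarefree (6 * m))).card : ℝ) / N) /
        ((((Finset.Icc 1 N).filter (fun m => Squarefree (6 * m))).card : ℝ) / N))
      atTop (nhds ((1 - 3 / π ^ 2) / (3 / π ^ 2))) :=
    (tendsto_const_nhds.sub hmain2).div hmain2 hlam.ne'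
  have hval : (1 - 3 / π ^ 2) / (3 / π ^ 2) = π ^ 2 / 3 - 1 := by
    field_simp
    try ring
  rw [hval] at hdiv
  apply hdiv.congr'
  filter_upwards [hev] with N hN
  set S := (((Finset.Icc 1 N).filter (fun m => Squarefree (6 * m))).card : ℝ) with hSdef
  have hS0 : S ≠ 0 := by
    intro h
    rw [h, zero_div] at hN
    exact lt_irrefl 0 hN
  have hN0 : (N:ℝ) ≠ 0 := by
    intro h
    rw [h, div_zero] at hN
    exact lt_irrefl 0 hN
  have hcard : ((Finset.Icc 1 N).filter (fun m => Squarefree (6 * m))).card +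
      ((Finset.Icc 1 N).filter (fun m => ¬ Squarefree (6 * m))).card = N := by
    rw [Finset.card_filter_add_card_filter_not, Nat.card_Icc]
    omega
  have hcardR : S + (((Finset.Icc 1 N).filter (fun m => ¬ Squarefree (6 * m))).card : ℝ)
      = (N : ℝ) := by
    rw [hSdef]
    exact_mod_cast congrArg (fun k : ℕ => (k:ℝ)) hcard
  field_simp
  nlinarith [hcardR]
end
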